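/- Suppose (R, ≤, r) satisfies axioms A.1–A.4 and R is metrically closed in AR^ℕ. Then for every k < ω, every B ∈ R, and every finite coloring of AR_k, there exists A ∈ R with A ≤ B such that AR_k|A = {a ∈ AR_k : a ≤_fin r_m(A) for some m} is monochromatic. -/
import Mathlib


open Topology

/-- The data of an abstract topological Ramsey space `(R, ≤, r)` with
finitized quasi-order `≤_fin`.  The type `Ap` plays the role of the set `AR`
of all finite approximations. -/
structure RamseyBase where
  R : Type
  Ap : Type
  le : R → R → Prop
  r : ℕ → R → Ap
  lefin : Ap → Ap → Prop

namespace RamseyBase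

variable (D : RamseyBase)

/-- `AR_n`, the set of length-`n` approximations. -/
def AR (n : ℕ) : Set D.Ap := Set.range (D.r n)

/-- `|a| = n`, i.e. `a` is a length-`n` approximation. -/
def len (a : D.Ap) (n : ℕ) : Prop := a ∈ D.AR n

/-- `a ⊑ b` : `a` is an initial segment of `b`. -/
def sq (a b : D.Ap) : Prop := ∃ (B : D.R) (n m : ℕ), m ≤ n ∧ b = D.r n B ∧ a = D.r m B

/-- The basic set `[a,B] = {C ∈ R : C ≤ B and r_n(C) = a for some n}`. -/
def ell (a : D.Ap) (B : D.R) : Set D.R := {C | D.le C B ∧ ∃ n, D.r n C = a}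

/-- `r_n[a,A] = {r_n(C) : C ∈ [a,A]}`. -/
def rset (n : ℕ) (a : D.Ap) (A : D.R) : Set D.Ap := (D.r n) '' (D.ell a A)

/-- `depth_B(a) = n` : `n` is the least integer with `a ≤_fin r_n(B)`. -/
def hasDepth (B : D.R) (a : D.Ap) (n : ℕ) : Prop :=
  D.lefin a (D.r n B) ∧ ∀ m < n, ¬ D.lefin a (D.r m B)

/-- `AR_k|A = {a ∈ AR_k : a ≤_fin r_m(A) for some m}`. -/
def ARres (k : ℕ) (A : D.R) : Set D.Ap := {a | a ∈ D.AR k ∧ ∃ m, D.lefin a (D.r m A)}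

/-- The Tychonoff (product) topology on `(AR)^ℕ`, with `AR` discrete. -/
def topSeq : TopologicalSpace (ℕ → D.Ap) :=
  @Pi.topologicalSpace ℕ (fun _ => D.Ap) (fun _ => ⊥)

/-- `R` is metrically closed in `(AR)^ℕ`. -/
def RClosed : Prop := IsClosed[D.topSeq] (Set.range (fun (B : D.R) (n : ℕ) => D.r n B))

/-- Axioms **A.1**–**A.4** for `(R, ≤, r)`, together with the standing
assumptions that `R` is nonempty, `≤` and `≤_fin` are quasi-orders, and every
element of `Ap` is an approximation. -/
structure BaseAxioms (D : RamseyBase) : Prop where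
  R_nonempty : Nonempty D.R
  le_refl : ∀ A, D.le A A
  le_trans : ∀ A B C, D.le A B → D.le B C → D.le A C
  lefin_refl : ∀ a, D.lefin a a
  lefin_trans : ∀ a b c, D.lefin a b → D.lefin b c → D.lefin a c
  ap_approx : ∀ a : D.Ap, ∃ n, a ∈ D.AR n
  -- A.1
  a1a : ∀ A B, D.r 0 A = D.r 0 B
  a1b : ∀ A B : D.R, A ≠ B → ∃ n, D.r n A ≠ D.r n B
  a1c : ∀ A B n m, D.r n A = D.r m B → n = m ∧ ∀ j < n, D.r j A = D.r j B
  -- A.2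
  a2a : ∀ b, {a | D.lefin a b}.Finite
  a2b : ∀ A B, D.le A B ↔ ∀ n, ∃ m, D.lefin (D.r n A) (D.r m B)
  a2c : ∀ a b c, D.sq a b → D.lefin b c → ∃ d, D.sq d c ∧ D.lefin a d
  -- A.3
  a3a : ∀ B a n, D.hasDepth B a n → ∀ A ∈ D.ell (D.r n B) B, (D.ell a A).Nonempty
  a3b : ∀ A B a, D.le A B → (D.ell a A).Nonempty →
    ∃ n, D.hasDepth B a n ∧
      ∃ A' ∈ D.ell (D.r n B) B, (D.ell a A').Nonempty ∧ D.ell a A' ⊆ D.ell a A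
  -- A.4
  a4 : ∀ B a n m (O : Set D.Ap), D.hasDepth B a n → D.len a m → O ⊆ D.AR (m + 1) →
    ∃ A ∈ D.ell (D.r n B) B, D.rset (m + 1) a A ⊆ O ∨ D.rset (m + 1) a A ∩ O = ∅

end RamseyBase


namespace RamseyBase

variable {D : RamseyBase}

section helpers

variable (hb : D.BaseAxioms)

include hb

lemma mem_ell_self (A : D.R) (m : ℕ) : A ∈ D.ell (D.r m A) A := ⟨hb.le_refl A, m, rfl⟩

omit hb in
lemma ell_le {C' C : D.R} {a : D.Ap} (h : C' ∈ D.ell a C) : D.le C' C := h.1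

lemma ell_agree {C' C : D.R} {m : ℕ} (h : C' ∈ D.ell (D.r m C) C) :
    ∀ j ≤ m, D.r j C' = D.r j C := by
  obtain ⟨-, j0, hj0⟩ := h
  obtain ⟨hj0m, hlt⟩ := hb.a1c C' C j0 m hj0
  subst hj0m
  intro j hj
  rcases lt_or_eq_of_le hj with h' | h'
  · exact hlt j h'
  · subst h'; exact hj0

lemma ell_trans {C2 C1 C : D.R} {m : ℕ} (h2 : C2 ∈ D.ell (D.r m C1) C1)
    (h1 : C1 ∈ D.ell (D.r m C) C) : C2 ∈ D.ell (D.r m C) C := by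
  refine ⟨hb.le_trans _ _ _ h2.1 h1.1, m, ?_⟩
  rw [ell_agree hb h2 m le_rfl, ell_agree hb h1 m le_rfl]

lemma rset_mono {C2 C1 : D.R} (h : D.le C2 C1) {a : D.Ap} {j : ℕ} :
    D.rset j a C2 ⊆ D.rset j a C1 := by
  rintro b ⟨C, ⟨hC, hr⟩, rfl⟩
  exact ⟨C, ⟨hb.le_trans _ _ _ hC h, hr⟩, rfl⟩

omit hb in
lemma hasDepth_transfer {C' C : D.R} {a : D.Ap} {d : ℕ}
    (hagree : ∀ j ≤ d, D.r j C' = D.r j C) (h : D.hasDepth C a d) : D.hasDepth C' a d := by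
  refine ⟨?_, fun m hm => ?_⟩
  · rw [hagree d le_rfl]; exact h.1
  · rw [hagree m hm.le]; exact h.2 m hm

omit hb in
lemma exists_hasDepth {C : D.R} {a : D.Ap} {m : ℕ} (h : D.lefin a (D.r m C)) :
    ∃ d, D.hasDepth C a d := by
  classical
  have hex : ∃ d, D.lefin a (D.r d C) := ⟨m, h⟩
  exact ⟨Nat.find hex, Nat.find_spec hex, fun j hj => Nat.find_min hex hj⟩

lemma pigeonAux {n k : ℕ} (c : D.Ap → Fin (n + 1)) {a : D.Ap} (hlen : D.len a k) (d : ℕ) :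
    ∀ (l : List (Fin (n + 1))) (C : D.R), D.hasDepth C a d →
      ∃ C' ∈ D.ell (D.r d C) C,
        (∃ i, ∀ b ∈ D.rset (k + 1) a C', c b = i) ∨
        (∀ i ∈ l, D.rset (k + 1) a C' ∩ {b | b ∈ D.AR (k + 1) ∧ c b = i} = ∅) := by
  intro l
  induction l with
  | nil => intro C hC; exact ⟨C, mem_ell_self hb C d, Or.inr (by simp)⟩
  | cons i l ih =>
    intro C hC
    obtain ⟨C1, hC1, hdich⟩ :=
      hb.a4 C a d k {b | b ∈ D.AR (k + 1) ∧ c b = i} hC hlen (fun b hb' => hb'.1)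
    rcases hdich with hsub | hdisj
    · exact ⟨C1, hC1, Or.inl ⟨i, fun b hbmem => (hsub hbmem).2⟩⟩
    · have hC1d : D.hasDepth C1 a d := hasDepth_transfer (ell_agree hb hC1) hC
      obtain ⟨C2, hC2, hres⟩ := ih C1 hC1d
      refine ⟨C2, ell_trans hb hC2 hC1, ?_⟩
      rcases hres with h | h
      · exact Or.inl h
      · refine Or.inr fun i' hi' => ?_
        rcases List.mem_cons.mp hi' with rfl | hi'
        · apply Set.eq_empty_of_subset_empty
          rw [← hdisj]
          exact Set.inter_subset_inter_left _ (rset_mono hb (ell_le hC2))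
        · exact h i' hi'

lemma pigeon {n k : ℕ} (c : D.Ap → Fin (n + 1)) {a : D.Ap} (hlen : D.len a k)
    {C : D.R} {d : ℕ} (hC : D.hasDepth C a d) :
    ∃ C' ∈ D.ell (D.r d C) C, ∃ i, ∀ b ∈ D.rset (k + 1) a C', c b = i := by
  obtain ⟨C', hC', hres⟩ := pigeonAux hb c hlen d (List.finRange (n + 1)) C hC
  rcases hres with h | h
  · exact ⟨C', hC', h⟩
  · exfalso
    have hC'd : D.hasDepth C' a d := hasDepth_transfer (ell_agree hb hC') hC
    obtain ⟨C0, hC0⟩ := hb.a3a C' a d hC'd C' (mem_ell_self hb C' d)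
    have hbmem : D.r (k + 1) C0 ∈ D.rset (k + 1) a C' := ⟨C0, hC0, rfl⟩
    have hdis := h (c (D.r (k + 1) C0)) (List.mem_finRange _)
    have hmem : D.r (k + 1) C0 ∈
        D.rset (k + 1) a C' ∩ {b | b ∈ D.AR (k + 1) ∧ c b = c (D.r (k + 1) C0)} :=
      ⟨hbmem, ⟨C0, rfl⟩, rfl⟩
    rw [hdis] at hmem
    exact absurd hmem (Set.notMem_empty _)

lemma stage {n : ℕ} (k : ℕ) (c : D.Ap → Fin (n + 1)) (m : ℕ) (C : D.R) :
    ∃ C' ∈ D.ell (D.r m C) C,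
      ∀ a, D.len a k → D.hasDepth C a m → ∃ i, ∀ b ∈ D.rset (k + 1) a C', c b = i := by
  classical
  have hfin : {x | D.lefin x (D.r m C)}.Finite := hb.a2a _
  suffices h : ∀ s : Finset D.Ap, ∃ C' ∈ D.ell (D.r m C) C,
      ∀ a ∈ s, D.len a k → D.hasDepth C a m → ∃ i, ∀ b ∈ D.rset (k + 1) a C', c b = i by
    obtain ⟨C', hC', hp⟩ := h hfin.toFinset
    exact ⟨C', hC', fun a ha hd => hp a (hfin.mem_toFinset.mpr hd.1) ha hd⟩
  intro s
  induction s using Finset.induction_on with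
  | empty => exact ⟨C, mem_ell_self hb C m, by simp⟩
  | @insert a0 s0 ha0 ih =>
    obtain ⟨C1, hC1, hp1⟩ := ih
    by_cases hcase : D.len a0 k ∧ D.hasDepth C a0 m
    · have hC1d : D.hasDepth C1 a0 m := hasDepth_transfer (ell_agree hb hC1) hcase.2
      obtain ⟨C2, hC2, i, hi⟩ := pigeon hb c hcase.1 hC1d
      refine ⟨C2, ell_trans hb hC2 hC1, ?_⟩
      intro x hx hxlen hxd
      rcases Finset.mem_insert.mp hx with rfl | hx'
      · exact ⟨i, hi⟩
      · obtain ⟨i', hi'⟩ := hp1 x hx' hxlen hxd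
        exact ⟨i', fun b hbm => hi' b (rset_mono hb (ell_le hC2) hbm)⟩
    · refine ⟨C1, hC1, ?_⟩
      intro x hx hxlen hxd
      rcases Finset.mem_insert.mp hx with rfl | hx'
      · exact absurd ⟨hxlen, hxd⟩ hcase
      · exact hp1 x hx' hxlen hxd

lemma ramsey_aux (hRcl : D.RClosed) (n : ℕ) :
    ∀ (k : ℕ) (B : D.R) (c : D.Ap → Fin (n + 1)),
      ∃ A : D.R, D.le A B ∧ ∃ i, ∀ a ∈ D.ARres k A, c a = i := by
  intro k
  induction k with
  | zero =>
    intro B c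
    refine ⟨B, hb.le_refl B, c (D.r 0 B), ?_⟩
    rintro a ⟨⟨C, rfl⟩, -⟩
    rw [hb.a1a C B]
  | succ k ih =>
    intro B c
    classical
    let seq : ℕ → D.R := fun m => Nat.rec B (fun m' Am => (stage hb k c m' Am).choose) m
    have hseq : ∀ m, seq (m + 1) ∈ D.ell (D.r m (seq m)) (seq m) ∧
        ∀ a, D.len a k → D.hasDepth (seq m) a m →
          ∃ i, ∀ b ∈ D.rset (k + 1) a (seq (m + 1)), c b = i := by
      intro m
      have h := (stage hb k c m (seq m)).choose_spec
      exact ⟨h.1, h.2⟩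
    have agree : ∀ j m m', m ≤ m' → j ≤ m → D.r j (seq m') = D.r j (seq m) := by
      intro j m m' hmm'
      induction m', hmm' using Nat.le_induction with
      | base => intro _; rfl
      | succ m' hmm' ih2 =>
        intro hj
        rw [ell_agree hb (hseq m').1 j (hj.trans hmm')]
        exact ih2 hj
    have led : ∀ m m', m ≤ m' → D.le (seq m') (seq m) := by
      intro m m' h
      induction m', h using Nat.le_induction with
      | base => exact hb.le_refl _
      | succ m' hmm' ih2 => exact hb.le_trans _ _ _ (ell_le (hseq m').1) ih2
    obtain ⟨Abar, hAbar⟩ : ∃ A : D.R, ∀ j, D.r j A = D.r j (seq j) := by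
      letI : TopologicalSpace D.Ap := ⊥
      haveI : DiscreteTopology D.Ap := ⟨rfl⟩
      have hcl : IsClosed (Set.range (fun (B : D.R) (n : ℕ) => D.r n B)) := hRcl
      have htend : Filter.Tendsto (fun m => (fun j => D.r j (seq m)))
          Filter.atTop (nhds (fun j => D.r j (seq j))) := by
        rw [tendsto_pi_nhds]
        intro j
        exact tendsto_atTop_of_eventually_const (i₀ := j)
          (fun m hm => agree j j m hm le_rfl)
      have hmem : (fun j => D.r j (seq j)) ∈
          Set.range (fun (B : D.R) (n : ℕ) => D.r n B) :=
        hcl.closure_subset (mem_closure_of_tendsto htend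
          (Filter.Eventually.of_forall (fun m => Set.mem_range_self _)))
      obtain ⟨A, hA⟩ := hmem
      exact ⟨A, fun j => congrFun hA j⟩
    have hAbarle : ∀ m, D.le Abar (seq m) := by
      intro m
      rw [hb.a2b]
      intro j
      rcases le_or_gt j m with hj | hj
      · refine ⟨j, ?_⟩
        rw [hAbar j, agree j j m hj le_rfl]
        exact hb.lefin_refl _
      · have hle : D.le (seq j) (seq m) := led m j hj.le
        obtain ⟨m2, hm2⟩ := (hb.a2b (seq j) (seq m)).mp hle j
        refine ⟨m2, ?_⟩
        rw [hAbar j]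
        exact hm2
    have step5 : ∀ a, D.len a k → (∃ m, D.lefin a (D.r m Abar)) →
        ∃ i, ∀ b ∈ D.rset (k + 1) a Abar, c b = i := by
      rintro a hlen ⟨m, hm⟩
      obtain ⟨d, hd⟩ := exists_hasDepth hm
      have hdseq : D.hasDepth (seq d) a d := by
        refine hasDepth_transfer (fun j hj => ?_) hd
        rw [agree j j d hj le_rfl, hAbar j]
      obtain ⟨i, hi⟩ := (hseq d).2 a hlen hdseq
      exact ⟨i, fun b hbm => hi b (rset_mono hb (hAbarle (d + 1)) hbm)⟩
    let c' : D.Ap → Fin (n + 1) := fun a =>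
      if h : (D.ell a Abar).Nonempty then c (D.r (k + 1) h.some) else 0
    obtain ⟨A', hA'le, i, hmono'⟩ := ih Abar c'
    refine ⟨A', hb.le_trans _ _ _ hA'le (hAbarle 0), i, ?_⟩
    rintro b ⟨hbAR, m, hbm⟩
    obtain ⟨d, hd⟩ := exists_hasDepth hbm
    obtain ⟨C, hCle, j, hjC⟩ := hb.a3a A' b d hd A' (mem_ell_self hb A' d)
    obtain ⟨C0, hC0⟩ := hbAR
    have hj : j = k + 1 := (hb.a1c C C0 j (k + 1) (by rw [hjC, hC0])).1
    subst hj
    have halen : D.len (D.r k C) k := ⟨C, rfl⟩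
    have haA' : ∃ m2, D.lefin (D.r k C) (D.r m2 A') := (hb.a2b C A').mp hCle k
    have hci : c' (D.r k C) = i := hmono' _ ⟨halen, haA'⟩
    have haAbar : ∃ m3, D.lefin (D.r k C) (D.r m3 Abar) := by
      obtain ⟨m2, hm2⟩ := haA'
      obtain ⟨m3, hm3⟩ := (hb.a2b A' Abar).mp hA'le m2
      exact ⟨m3, hb.lefin_trans _ _ _ hm2 hm3⟩
    obtain ⟨i2, hi2⟩ := step5 (D.r k C) halen haAbar
    have hCell : C ∈ D.ell (D.r k C) Abar := ⟨hb.le_trans _ _ _ hCle hA'le, k, rfl⟩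
    have hne : (D.ell (D.r k C) Abar).Nonempty := ⟨C, hCell⟩
    have hc'val : c' (D.r k C) = c (D.r (k + 1) hne.some) := dif_pos hne
    have h1 : c (D.r (k + 1) hne.some) = i2 := hi2 _ ⟨hne.some, hne.some_mem, rfl⟩
    have h2 : c b = i2 := by
      rw [← hjC]
      exact hi2 _ ⟨C, hCell, rfl⟩
    rw [h2, ← h1, ← hc'val, hci]

end helpers

end RamseyBase

/-- **Lemma (abstract Ramsey theorem for finite approximations).**  If
`(R, ≤, r)` satisfies axioms A.1–A.4 and `R` is metrically closed in `(AR)^ℕ`,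
then for every `k < ω`, every `B ∈ R`, and every finite coloring of `AR_k`,
there exists `A ≤ B` such that `AR_k|A` is monochromatic. -/
theorem abstract_ramsey_approx
    (D : RamseyBase) (hbase : D.BaseAxioms) (hRcl : D.RClosed)
    (k : ℕ) (B : D.R) (n : ℕ) (c : D.Ap → Fin n) :
    ∃ A : D.R, D.le A B ∧ ∃ i : Fin n, ∀ a ∈ D.ARres k A, c a = i := by
  cases n with
  | zero => exact (c (D.r 0 B)).elim0
  | succ n => exact RamseyBase.ramsey_aux hbase hRcl n k B c
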